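/- For every graph G, 1 + 1/(g_o(G) − 1) ≤ x(G) ≤ 2 − 1/⌈χ(G)/2⌉, where g_o(G) is the odd girth and χ(G) the chromatic number. In particular 1 ≤ x(G) < 2. -/

import Mathlib

attribute [local instance] Classical.propDecidable

/-- A cut in a graph: the set of edges leaving some vertex set `W`. -/
def IsCut {V : Type*} (G : SimpleGraph V) (X : Set (Sym2 V)) : Prop :=
  ∃ W : Set V, X = {e | e ∈ G.edgeSet ∧ ∃ a b, e = s(a, b) ∧ a ∈ W ∧ b ∉ W}

/-- An `n/k`-cover: `n` cuts covering every edge at least `k` times. -/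
def HasCover {V : Type*} (G : SimpleGraph V) (n k : ℕ) : Prop :=
  ∃ X : Fin n → Set (Sym2 V), (∀ i, IsCut G (X i)) ∧
    ∀ e ∈ G.edgeSet, k ≤ (Finset.univ.filter fun i => e ∈ X i).card

/-- The fractional cut-covering number `x(G)`. -/
noncomputable def cutCover {V : Type*} (G : SimpleGraph V) : ℝ :=
  sInf { q : ℝ | ∃ n k : ℕ, 0 < k ∧ q = n / k ∧ HasCover G n k }


def cutOf {V : Type*} (G : SimpleGraph V) (W : Set V) : Set (Sym2 V) :=
  {e | e ∈ G.edgeSet ∧ ∃ a b, e = s(a, b) ∧ a ∈ W ∧ b ∉ W}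

lemma mem_cutOf {V : Type*} {G : SimpleGraph V} {W : Set V} {a b : V}
    (he : s(a, b) ∈ G.edgeSet) :
    s(a, b) ∈ cutOf G W ↔ ((a ∈ W ∧ b ∉ W) ∨ (b ∈ W ∧ a ∉ W)) := by
  constructor
  · rintro ⟨-, a', b', h, ha, hb⟩
    rw [Sym2.eq_iff] at h
    rcases h with ⟨rfl, rfl⟩ | ⟨rfl, rfl⟩
    · exact Or.inl ⟨ha, hb⟩
    · exact Or.inr ⟨ha, hb⟩
  · rintro (⟨ha, hb⟩ | ⟨hb, ha⟩)
    · exact ⟨he, a, b, rfl, ha, hb⟩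
    · exact ⟨he, b, a, Sym2.eq_swap, hb, ha⟩

lemma even_countP_cross {V : Type*} (W : Set V) {G : SimpleGraph V} {u v : V}
    (w : G.Walk u v) :
    Even (w.darts.countP (fun d => decide ((d.fst ∈ W ∧ d.snd ∉ W) ∨ (d.snd ∈ W ∧ d.fst ∉ W))))
      ↔ (u ∈ W ↔ v ∈ W) := by
  induction w with
  | nil => simp
  | @cons u x v h p ih =>
    rw [SimpleGraph.Walk.darts_cons, List.countP_cons]
    by_cases hux : (u ∈ W ∧ x ∉ W) ∨ (x ∈ W ∧ u ∉ W)
    · have : (if decide ((u ∈ W ∧ x ∉ W) ∨ (x ∈ W ∧ u ∉ W)) = true then 1 else 0) = 1 := by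
        simp [hux]
      rw [this, Nat.even_add_one, ih]
      tauto
    · have : (if decide ((u ∈ W ∧ x ∉ W) ∨ (x ∈ W ∧ u ∉ W)) = true then 1 else 0) = 0 := by
        simp [hux]
      rw [this, Nat.add_zero, ih]
      tauto

lemma countP_edges_cut {V : Type*} {G : SimpleGraph V} (W : Set V) {u v : V} (w : G.Walk u v) :
    w.edges.countP (fun e => decide (e ∈ cutOf G W)) =
    w.darts.countP (fun d => decide ((d.fst ∈ W ∧ d.snd ∉ W) ∨ (d.snd ∈ W ∧ d.fst ∉ W))) := by
  rw [SimpleGraph.Walk.edges, List.countP_map]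
  refine List.countP_congr ?_
  intro d _
  simp only [Function.comp_apply, decide_eq_true_eq]
  exact mem_cutOf d.edge_mem

lemma card_filter_toFinset {α : Type*} [DecidableEq α] {l : List α} (hl : l.Nodup)
    (p : α → Prop) [DecidablePred p] :
    (l.toFinset.filter p).card = l.countP (fun a => decide (p a)) := by
  rw [List.countP_eq_length_filter, ← List.toFinset_card_of_nodup (hl.filter _)]
  congr 1
  ext a
  simp [List.mem_filter]

def IsCut' {V : Type*} (G : SimpleGraph V) (X : Set (Sym2 V)) : Prop :=
  ∃ W : Set V, X = cutOf G W

lemma cut_cycle_card {V : Type*} {G : SimpleGraph V} {X : Set (Sym2 V)} (hX : IsCut' G X)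
    {a : V} {w : G.Walk a a} (hw : w.IsCycle) {g : ℕ} (hl : w.length = g) (hodd : Odd g) :
    (w.edges.toFinset.filter (· ∈ X)).card ≤ g - 1 := by
  obtain ⟨W, rfl⟩ := hX
  rw [card_filter_toFinset hw.edges_nodup, countP_edges_cut]
  set m := w.darts.countP
    (fun d => decide ((d.fst ∈ W ∧ d.snd ∉ W) ∨ (d.snd ∈ W ∧ d.fst ∉ W))) with hm
  have heven : Even m := (even_countP_cross W w).2 Iff.rfl
  have hle : m ≤ g := by
    calc m ≤ w.darts.length := List.countP_le_length
    _ = g := by rw [SimpleGraph.Walk.length_darts, hl]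
  have : m ≠ g := fun h => (Nat.not_even_iff_odd.mpr hodd) (h ▸ heven)
  omega

def HasCover' {V : Type*} (G : SimpleGraph V) (n k : ℕ) : Prop :=
  ∃ X : Fin n → Set (Sym2 V), (∀ i, IsCut' G (X i)) ∧
    ∀ e ∈ G.edgeSet, k ≤ (Finset.univ.filter fun i => e ∈ X i).card

lemma cover_lower {V : Type*} {G : SimpleGraph V} {n k g : ℕ}
    (hcov : HasCover' G n k) {a : V} {w : G.Walk a a} (hw : w.IsCycle) (hl : w.length = g)
    (hodd : Odd g) : g * k ≤ n * (g - 1) := by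
  obtain ⟨X, hcut, hc⟩ := hcov
  have hE : w.edges.toFinset.card = g := by
    rw [List.toFinset_card_of_nodup hw.edges_nodup, SimpleGraph.Walk.length_edges, hl]
  have h1 : g * k ≤ ∑ e ∈ w.edges.toFinset, (Finset.univ.filter fun i => e ∈ X i).card := by
    calc g * k = w.edges.toFinset.card • k := by rw [hE, smul_eq_mul]
    _ ≤ _ := Finset.card_nsmul_le_sum _ _ _ (fun e he =>
          hc e (w.edges_subset_edgeSet (List.mem_toFinset.mp he)))
  have h2 : ∑ e ∈ w.edges.toFinset, (Finset.univ.filter fun i => e ∈ X i).card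
      = ∑ i : Fin n, (w.edges.toFinset.filter (· ∈ X i)).card := by
    calc ∑ e ∈ w.edges.toFinset, (Finset.univ.filter fun i => e ∈ X i).card
        = ∑ e ∈ w.edges.toFinset, ∑ i : Fin n, if e ∈ X i then 1 else 0 :=
          Finset.sum_congr rfl fun e _ => Finset.card_filter _ _
    _ = ∑ i : Fin n, ∑ e ∈ w.edges.toFinset, if e ∈ X i then 1 else 0 := Finset.sum_comm
    _ = _ := Finset.sum_congr rfl fun i _ => (Finset.card_filter _ _).symm
  have h3 : ∑ i : Fin n, (w.edges.toFinset.filter (· ∈ X i)).card ≤ n * (g - 1) := by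
    calc ∑ i : Fin n, (w.edges.toFinset.filter (· ∈ X i)).card
        ≤ ∑ _i : Fin n, (g - 1) :=
          Finset.sum_le_sum (fun i _ => cut_cycle_card (hcut i) hw hl hodd)
    _ = n * (g - 1) := by simp [Finset.sum_const, mul_comm]
  omega

lemma count_sep {m t : ℕ} (ht : 1 ≤ t) {a b : Fin m} (hab : a ≠ b) :
    ((Finset.powersetCard t (Finset.univ : Finset (Fin m))).filter
      (fun S => a ∈ S ∧ b ∉ S)).card = Nat.choose (m - 2) (t - 1) := by
  have hcard : ((Finset.univ.erase b).erase a).card = m - 2 := by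
    rw [Finset.card_erase_of_mem (Finset.mem_erase.mpr ⟨hab, Finset.mem_univ a⟩),
      Finset.card_erase_of_mem (Finset.mem_univ b), Finset.card_univ, Fintype.card_fin]
    omega
  rw [show Nat.choose (m - 2) (t - 1) =
      (Finset.powersetCard (t - 1) ((Finset.univ.erase b).erase a)).card by
    rw [Finset.card_powersetCard, hcard]]
  refine Finset.card_bij' (fun S _ => S.erase a) (fun T _ => insert a T) ?_ ?_ ?_ ?_
  · intro S hS
    rw [Finset.mem_filter, Finset.mem_powersetCard] at hS
    obtain ⟨⟨-, hcardS⟩, haS, hbS⟩ := hS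
    rw [Finset.mem_powersetCard]
    constructor
    · intro x hx
      rw [Finset.mem_erase] at hx
      refine Finset.mem_erase.mpr ⟨hx.1, Finset.mem_erase.mpr ⟨?_, Finset.mem_univ x⟩⟩
      rintro rfl; exact hbS hx.2
    · rw [Finset.card_erase_of_mem haS, hcardS]
  · intro T hT
    rw [Finset.mem_powersetCard] at hT
    obtain ⟨hTsub, hTcard⟩ := hT
    have haT : a ∉ T := fun h => (Finset.mem_erase.mp (hTsub h)).1 rfl
    have hbT : b ∉ T := fun h => (Finset.mem_erase.mp (Finset.mem_erase.mp (hTsub h)).2).1 rfl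
    rw [Finset.mem_filter, Finset.mem_powersetCard]
    refine ⟨⟨Finset.subset_univ _, ?_⟩, Finset.mem_insert_self a T, ?_⟩
    · rw [Finset.card_insert_of_notMem haT, hTcard]; omega
    · rw [Finset.mem_insert]
      rintro (rfl | h)
      · exact hab rfl
      · exact hbT h
  · intro S hS
    rw [Finset.mem_filter] at hS
    exact Finset.insert_erase hS.2.1
  · intro T hT
    rw [Finset.mem_powersetCard] at hT
    exact Finset.erase_insert (fun h => (Finset.mem_erase.mp (hT.1 h)).1 rfl)

lemma count_sep_both {m t : ℕ} (ht : 1 ≤ t) {a b : Fin m} (hab : a ≠ b) :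
    ((Finset.powersetCard t (Finset.univ : Finset (Fin m))).filter
      (fun S => (a ∈ S ∧ b ∉ S) ∨ (b ∈ S ∧ a ∉ S))).card = 2 * Nat.choose (m - 2) (t - 1) := by
  rw [Finset.filter_or, Finset.card_union_of_disjoint, count_sep ht hab, count_sep ht hab.symm]
  · omega
  · rw [Finset.disjoint_left]
    intro S h1 h2
    rw [Finset.mem_filter] at h1 h2
    exact h1.2.2 h2.2.1

lemma key_id (s : ℕ) :
    (s + 1) * Nat.choose (2 * s + 2) (s + 1) = (2 * s + 1) * (2 * Nat.choose (2 * s) s) := by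
  have h1 : Nat.choose (2 * s + 2) (s + 1) = 2 * Nat.choose (2 * s + 1) s := by
    rw [show 2 * s + 2 = (2 * s + 1) + 1 by ring, Nat.choose_succ_succ]
    have : Nat.choose (2 * s + 1) (s + 1) = Nat.choose (2 * s + 1) s := by
      rw [← Nat.choose_symm (by omega : s + 1 ≤ 2 * s + 1)]
      congr 1; omega
    simp only [Nat.succ_eq_add_one] at this ⊢
    omega
  have h2 : (2 * s + 1) * Nat.choose (2 * s) s = Nat.choose (2 * s + 1) (s + 1) * (s + 1) :=
    Nat.add_one_mul_choose_eq (2 * s) s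
  have h3 : Nat.choose (2 * s + 1) (s + 1) = Nat.choose (2 * s + 1) s := by
    rw [← Nat.choose_symm (by omega : s + 1 ≤ 2 * s + 1)]
    congr 1; omega
  rw [h1]
  rw [h3] at h2
  ring_nf
  ring_nf at h2
  omega

lemma exists_cover {V : Type*} [Fintype V] {G : SimpleGraph V} {c t : ℕ} (ht : 1 ≤ t)
    (hct : c ≤ 2 * t) (C : G.Coloring (Fin c)) :
    HasCover' G (Nat.choose (2 * t) t) (2 * Nat.choose (2 * t - 2) (t - 1)) := by
  classical
  set n := Nat.choose (2 * t) t with hn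
  let f : V → Fin (2 * t) := fun v => Fin.castLE hct (C v)
  let s : Finset (Finset (Fin (2 * t))) := Finset.powersetCard t Finset.univ
  have hs : Fintype.card {S // S ∈ s} = n := by
    rw [Fintype.card_coe, Finset.card_powersetCard, Finset.card_univ, Fintype.card_fin]
  let σ : Fin n ≃ {S // S ∈ s} := (Fintype.equivFinOfCardEq hs).symm
  refine ⟨fun i => cutOf G {v | f v ∈ (σ i : Finset (Fin (2 * t)))},
    fun i => ⟨_, rfl⟩, ?_⟩
  intro e he
  induction e with
  | _ u v =>
    have hadj : G.Adj u v := he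
    have hne : f u ≠ f v := fun h => C.valid hadj (Fin.castLE_injective hct h)
    set Q : Finset (Fin (2 * t)) → Prop :=
      fun S => (f u ∈ S ∧ f v ∉ S) ∨ (f v ∈ S ∧ f u ∉ S) with hQdef
    have hQ : ∀ i, (s(u, v) ∈ cutOf G {x | f x ∈ (σ i : Finset (Fin (2 * t)))} ↔ Q (σ i)) := by
      intro i
      exact mem_cutOf he
    have hcard : (Finset.univ.filter fun i =>
        s(u, v) ∈ cutOf G {x | f x ∈ (σ i : Finset (Fin (2 * t)))}).card
        = (s.filter Q).card := by
      refine Finset.card_bij (fun i _ => (σ i : Finset (Fin (2 * t)))) ?_ ?_ ?_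
      · intro i hi
        rw [Finset.mem_filter] at hi ⊢
        exact ⟨(σ i).2, (hQ i).mp hi.2⟩
      · intro i _ j _ hij
        exact σ.injective (Subtype.ext hij)
      · intro S hS
        rw [Finset.mem_filter] at hS
        refine ⟨σ.symm ⟨S, hS.1⟩, ?_, by simp⟩
        rw [Finset.mem_filter]
        refine ⟨Finset.mem_univ _, (hQ _).mpr ?_⟩
        simpa using hS.2
    rw [hcard, count_sep_both ht hne]

lemma hasCover_iff {V : Type*} (G : SimpleGraph V) (n k : ℕ) :
    HasCover G n k ↔ HasCover' G n k := Iff.rfl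

lemma ceil_half (c : ℕ) : (⌈(c : ℚ) / 2⌉ : ℤ) = ((c + 1) / 2 : ℕ) := by
  rcases Nat.even_or_odd c with ⟨s, hs⟩ | ⟨s, hs⟩
  · subst hs
    rw [show ((s + s : ℕ) : ℚ) / 2 = ((s : ℤ) : ℚ) by push_cast; ring, Int.ceil_intCast]
    omega
  · subst hs
    rw [show ((2 * s + 1 : ℕ) : ℚ) / 2 = 1 / 2 + ((s : ℤ) : ℚ) by push_cast; ring,
      Int.ceil_add_intCast]
    have h12 : ⌈(1 : ℚ) / 2⌉ = 1 := by
      rw [Int.ceil_eq_iff] <;> norm_num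
    rw [h12]
    omega

lemma key_id' {t : ℕ} (ht : 1 ≤ t) :
    t * Nat.choose (2 * t) t = (2 * t - 1) * (2 * Nat.choose (2 * t - 2) (t - 1)) := by
  obtain ⟨s, rfl⟩ : ∃ s, t = s + 1 := ⟨t - 1, by omega⟩
  have h := key_id s
  have e1 : 2 * (s + 1) = 2 * s + 2 := by ring
  have e2 : 2 * (s + 1) - 2 = 2 * s := by omega
  have e3 : s + 1 - 1 = s := by omega
  have e4 : 2 * (s + 1) - 1 = 2 * s + 1 := by omega
  rw [e2, e3, e4, e1]
  omega

/-- `1 + 1/(g_o(G)-1) ≤ x(G) ≤ 2 - 1/⌈χ(G)/2⌉`; in particular `1 ≤ x(G) < 2`. -/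
theorem cutCover_bounds {V : Type*} [Fintype V] (G : SimpleGraph V)
    (hG : G.edgeSet.Nonempty) (g c : ℕ)
    (hodd : {n : ℕ | Odd n ∧ ∃ (a : V) (w : G.Walk a a), w.IsCycle ∧ w.length = n}.Nonempty)
    (hg : g = sInf {n : ℕ | Odd n ∧ ∃ (a : V) (w : G.Walk a a), w.IsCycle ∧ w.length = n})
    (hc : G.chromaticNumber = c) :
    1 + 1 / ((g : ℝ) - 1) ≤ cutCover G ∧
    cutCover G ≤ 2 - 1 / ((⌈(c : ℚ) / 2⌉ : ℤ) : ℝ) ∧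
    1 ≤ cutCover G ∧ cutCover G < 2 := by
  classical
  -- the coloring
  have hcol : G.Colorable c := by
    rw [← SimpleGraph.chromaticNumber_le_iff_colorable, hc]
  obtain ⟨C⟩ := hcol
  -- c ≥ 2
  obtain ⟨e₀, he₀⟩ := hG
  have hc2 : 2 ≤ c := by
    induction e₀ with
    | _ u v =>
      have hadj : G.Adj u v := he₀
      have hne : C u ≠ C v := C.valid hadj
      have h1 := (C u).isLt
      have h2 := (C v).isLt
      have : (C u).val ≠ (C v).val := fun h => hne (Fin.ext h)
      omega
  set t : ℕ := (c + 1) / 2 with htdef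
  have ht : 1 ≤ t := by omega
  have hct : c ≤ 2 * t := by omega
  -- the explicit cover
  set n₀ : ℕ := Nat.choose (2 * t) t with hn₀
  set k₀ : ℕ := 2 * Nat.choose (2 * t - 2) (t - 1) with hk₀
  have hk₀pos : 0 < k₀ := by
    have := Nat.choose_pos (show t - 1 ≤ 2 * t - 2 by omega)
    omega
  have hcover : HasCover G n₀ k₀ := (hasCover_iff G n₀ k₀).mpr (exists_cover ht hct C)
  have hmem : ((n₀ : ℝ) / k₀) ∈
      { q : ℝ | ∃ n k : ℕ, 0 < k ∧ q = n / k ∧ HasCover G n k } :=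
    ⟨n₀, k₀, hk₀pos, rfl, hcover⟩
  have hne : { q : ℝ | ∃ n k : ℕ, 0 < k ∧ q = n / k ∧ HasCover G n k }.Nonempty :=
    ⟨_, hmem⟩
  have hbdd : BddBelow { q : ℝ | ∃ n k : ℕ, 0 < k ∧ q = n / k ∧ HasCover G n k } := by
    refine ⟨0, ?_⟩
    rintro q ⟨n, k, hk, rfl, -⟩
    positivity
  -- value of n₀/k₀
  have hid : t * n₀ = (2 * t - 1) * k₀ := by
    rw [hn₀, hk₀]; exact key_id' ht
  have htR : (0 : ℝ) < t := by exact_mod_cast ht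
  have hkR : (0 : ℝ) < k₀ := by exact_mod_cast hk₀pos
  have hval : (n₀ : ℝ) / k₀ = 2 - 1 / t := by
    have hcast : (t : ℝ) * n₀ = (2 * (t : ℝ) - 1) * k₀ := by
      have h2 : ((t * n₀ : ℕ) : ℝ) = (((2 * t - 1) * k₀ : ℕ) : ℝ) := by rw [hid]
      push_cast [Nat.cast_sub (show 1 ≤ 2 * t by omega)] at h2
      linarith
    rw [div_eq_iff (ne_of_gt hkR)]
    field_simp at hcast ⊢
    linarith
  -- odd girth facts
  have hgmem := Nat.sInf_mem hodd
  rw [← hg] at hgmem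
  obtain ⟨hgodd, a, w, hw, hwl⟩ := hgmem
  have hg3 : 3 ≤ g := hwl ▸ hw.three_le_length
  have hgR : (1 : ℝ) < g := by
    have : (3 : ℝ) ≤ g := by exact_mod_cast hg3
    linarith
  -- lower bound for every element
  have hlb : ∀ q ∈ { q : ℝ | ∃ n k : ℕ, 0 < k ∧ q = n / k ∧ HasCover G n k },
      1 + 1 / ((g : ℝ) - 1) ≤ q := by
    rintro q ⟨n, k, hk, rfl, hcov⟩
    have hnat : g * k ≤ n * (g - 1) :=
      cover_lower ((hasCover_iff G n k).mp hcov) hw hwl hgodd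
    have hkR' : (0 : ℝ) < k := by exact_mod_cast hk
    have hcastle : (g : ℝ) * k ≤ n * ((g : ℝ) - 1) := by
      have : ((g * k : ℕ) : ℝ) ≤ ((n * (g - 1) : ℕ) : ℝ) := by exact_mod_cast hnat
      push_cast [Nat.cast_sub (show 1 ≤ g by omega)] at this
      linarith
    have hg1 : (g : ℝ) - 1 ≠ 0 := by linarith
    rw [show 1 + 1 / ((g : ℝ) - 1) = g / (g - 1) by field_simp; ring]
    rw [div_le_div_iff₀ (by linarith) hkR']
    linarith
  have hlow : 1 + 1 / ((g : ℝ) - 1) ≤ cutCover G := le_csInf hne hlb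
  have hup : cutCover G ≤ 2 - 1 / (t : ℝ) := by
    have := csInf_le hbdd hmem
    rw [hval] at this
    exact this
  have hceil : ((⌈(c : ℚ) / 2⌉ : ℤ) : ℝ) = (t : ℝ) := by
    rw [ceil_half c]
    push_cast
    rfl
  refine ⟨hlow, ?_, ?_, ?_⟩
  · rw [hceil]; exact hup
  · refine le_trans ?_ hlow
    have : 0 ≤ 1 / ((g : ℝ) - 1) := le_of_lt (one_div_pos.mpr (by linarith))
    linarith
  · have : 0 < 1 / (t : ℝ) := one_div_pos.mpr htR
    linarith
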